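/- arXiv:1906.03739 — 4 statements merged into one kernel-verified Lean document; each statement's English description precedes it below -/
import Mathlib

section
/- Let $n\geq 3$ and $0<c_+<n-2$. There is no positive global $C^2$ solution $u:[0,\infty)\to(0,\infty)$ of $u''(t)=n(n-2)u(t)^{(n+2)/(n-2)}$ with $u'(0)=-c_+u(0)^{n/(n-2)}$. -/
open Set

noncomputable section

lemma decay5 {f f' : ℝ → ℝ} {a M : ℝ}
    (hf : ∀ t ∈ Ici a, HasDerivWithinAt f (f' t) (Ici a) t)
    (hM : ∀ t ∈ Ioi a, f' t ≤ M) : ∀ t ∈ Ici a, f t ≤ f a + M * (t - a) := by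
  have hg : AntitoneOn (fun t => f t - M * t) (Ici a) := by
    apply antitoneOn_of_deriv_nonpos (convex_Ici a)
    · exact ContinuousOn.sub (fun t ht => ((hf t ht).continuousWithinAt))
        (continuousOn_const.mul continuousOn_id)
    · intro x hx
      rw [interior_Ici] at hx
      exact (((hf x (Ioi_subset_Ici_self hx)).hasDerivAt (Ici_mem_nhds hx)).sub
        ((hasDerivAt_id x).const_mul M)).differentiableAt.differentiableWithinAt
    · intro x hx
      rw [interior_Ici] at hx
      have hd : HasDerivAt (fun t => f t - M * t) (f' x - M * 1) x :=
        ((hf x (Ioi_subset_Ici_self hx)).hasDerivAt (Ici_mem_nhds hx)).sub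
          ((hasDerivAt_id x).const_mul M)
      rw [hd.deriv]
      have := hM x hx
      linarith
  intro t ht
  have := hg (mem_Ici.mpr le_rfl) ht ht
  simp only [] at this
  linarith

set_option maxHeartbeats 2000000 in
theorem stmt5 (n : ℕ) (hn : 3 ≤ n) (c : ℝ) (hc0 : 0 < c) (hc : c < (n : ℝ) - 2) :
    ¬ ∃ u : ℝ → ℝ,
      ContDiffOn ℝ 2 u (Ici 0) ∧
      (∀ t ∈ Ici (0 : ℝ), 0 < u t) ∧
      (∀ t : ℝ, 0 < t →
        derivWithin (derivWithin u (Ici 0)) (Ici 0) t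
          = n * ((n : ℝ) - 2) * u t ^ (((n : ℝ) + 2) / ((n : ℝ) - 2))) ∧
      derivWithin u (Ici 0) 0 = -c * u 0 ^ ((n : ℝ) / ((n : ℝ) - 2)) := by
  rintro ⟨u, hu2, hupos, hode, hinit⟩
  have hUniq : UniqueDiffOn ℝ (Ici (0:ℝ)) := uniqueDiffOn_Ici 0
  set u1 := derivWithin u (Ici (0:ℝ)) with hu1def
  set u2' := derivWithin u1 (Ici (0:ℝ)) with hu2def
  set m : ℝ := (n:ℝ) - 2 with hm
  have hn3 : (3:ℝ) ≤ (n:ℝ) := by exact_mod_cast hn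
  have hm0 : 0 < m := by rw [hm]; linarith
  have hmne : m ≠ 0 := ne_of_gt hm0
  set q : ℝ := (n:ℝ)/m with hqdef
  set p : ℝ := ((n:ℝ)+2)/m with hpdef
  set r : ℝ := -(2/m) with hrdef
  have hq0 : 0 < q := by rw [hqdef]; positivity
  have hr0 : r < 0 := by
    have : 0 < 2/m := by positivity
    rw [hrdef]; linarith
  have hqm : m * q = (n:ℝ) := by rw [hqdef]; field_simp
  have hr1 : r - 1 = -q := by rw [hrdef, hqdef]; field_simp; linarith
  have hr2 : r - 1 - 1 = -q - 1 := by rw [hr1]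
  -- derivatives
  have hud : ∀ t ∈ Ici (0:ℝ), HasDerivWithinAt u (u1 t) (Ici (0:ℝ)) t :=
    fun t ht => (hu2.differentiableOn (by norm_num) t ht).hasDerivWithinAt
  have hu1c : ContDiffOn ℝ 1 u1 (Ici (0:ℝ)) := hu2.derivWithin hUniq (by norm_num)
  have hu1d : ∀ t ∈ Ici (0:ℝ), HasDerivWithinAt u1 (u2' t) (Ici (0:ℝ)) t :=
    fun t ht => (hu1c.differentiableOn (by norm_num) t ht).hasDerivWithinAt
  -- first integral
  set K : ℝ := (m^2 - c^2) * u 0 ^ (2*q) with hKdef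
  have hu00 : 0 < u 0 := hupos 0 (mem_Ici.mpr le_rfl)
  have hK : 0 < K := by
    have h1 : 0 < u 0 ^ (2*q) := Real.rpow_pos_of_pos hu00 _
    rw [hKdef]
    exact mul_pos (by nlinarith) h1
  set E : ℝ → ℝ := fun t => u1 t ^ 2 - m^2 * u t ^ (2*q) with hEdef
  set E' : ℝ → ℝ := fun t => 2 * u1 t * u2' t - m^2 * (u1 t * (2*q) * u t ^ (2*q - 1)) with hE'def
  have hEd : ∀ t ∈ Ici (0:ℝ), HasDerivWithinAt E (E' t) (Ici (0:ℝ)) t := by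
    intro t ht
    have h1 : HasDerivWithinAt (fun s => u1 s ^ 2) (2 * u1 t * u2' t) (Ici (0:ℝ)) t := by
      have h := (hu1d t ht).pow 2
      norm_num at h
      exact h
    exact h1.sub (((hud t ht).rpow_const (Or.inl (hupos t ht).ne')).const_mul (m^2))
  have hE'0 : ∀ t, 0 < t → E' t = 0 := by
    intro t ht
    have e : u t ^ (2*q - 1) = u t ^ p := by
      rw [hpdef, hqdef]; congr 1; field_simp; ring
    simp only [hE'def]
    rw [hode t ht, e]
    linear_combination (-2 * u1 t * u t ^ p * m) * hqm
  have hEconst : ∀ t ∈ Ici (0:ℝ), E t = E 0 := by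
    intro t ht
    have h1 := decay5 hEd (fun s hs => le_of_eq (hE'0 s hs)) t ht
    have h2 := decay5 (f := fun s => -E s) (f' := fun s => -E' s)
      (fun s hs => (hEd s hs).neg)
      (fun s hs => by show -E' s ≤ 0; rw [hE'0 s hs]; norm_num) t ht
    linarith
  have hE0val : E 0 = -K := by
    simp only [hEdef, hKdef]
    rw [hinit]
    have e2 : (u 0 ^ q) ^ (2:ℕ) = u 0 ^ (2*q) := by
      rw [← Real.rpow_natCast (u 0 ^ q) 2, ← Real.rpow_mul hu00.le]
      norm_num
      ring_nf
    nlinarith [e2]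
  have hsq : ∀ t, 0 ≤ t → u1 t * u1 t = m^2 * u t ^ (2*q) - K := by
    intro t ht
    have h := hEconst t ht
    rw [hE0val] at h
    simp only [hEdef] at h
    nlinarith [h]
  -- the function v = u ^ r and its derivatives
  set v : ℝ → ℝ := fun t => u t ^ r with hvdef
  set v1 : ℝ → ℝ := fun t => u1 t * r * u t ^ (r - 1) with hv1def
  have hvd : ∀ t ∈ Ici (0:ℝ), HasDerivWithinAt v (v1 t) (Ici (0:ℝ)) t :=
    fun t ht => (hud t ht).rpow_const (Or.inl (hupos t ht).ne')
  set D1 : ℝ → ℝ := fun t =>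
    u2' t * r * u t ^ (r - 1) + (u1 t * r) * (u1 t * (r-1) * u t ^ (r - 1 - 1)) with hD1def
  have hv1d : ∀ t ∈ Ici (0:ℝ), HasDerivWithinAt v1 (D1 t) (Ici (0:ℝ)) t := by
    intro t ht
    exact ((hu1d t ht).mul_const r).mul ((hud t ht).rpow_const (Or.inl (hupos t ht).ne'))
  have hD1eq : ∀ t, 0 < t → D1 t = r * q * K * u t ^ (-q - 1) := by
    intro t ht
    have hx : 0 < u t := hupos t ht.le
    have h5 : u t ^ (-q) * u t ^ p = u t ^ (q - 1) := by
      rw [← Real.rpow_add hx]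
      congr 1
      rw [hpdef, hqdef, hm]
      have h2 : (n:ℝ) - 2 ≠ 0 := by linarith
      field_simp
      ring
    have h6 : u t ^ (-q - 1) * u t ^ (2*q) = u t ^ (q - 1) := by
      rw [← Real.rpow_add hx]
      congr 1
      ring
    simp only [hD1def]
    rw [hr1, hode t ht]
    rw [show (u1 t * r) * (u1 t * (-q) * u t ^ (-q - 1))
        = r * (-q) * (u t ^ (-q - 1) * (u1 t * u1 t)) from by ring, hsq t ht.le]
    rw [show ↑n * m * u t ^ p * r * u t ^ (-q)
        = ↑n * m * r * (u t ^ (-q) * u t ^ p) from by ring, h5]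
    rw [show r * (-q) * (u t ^ (-q - 1) * (m ^ 2 * u t ^ (2*q) - K))
        = -(r * q * m^2) * (u t ^ (-q - 1) * u t ^ (2*q)) + r * q * K * u t ^ (-q-1) from by
          ring, h6]
    linear_combination (-(r * u t ^ (q-1) * m)) * hqm
  -- step (i): v1 is nonnegative on (0, ∞)
  have hv1nonneg : ∀ t, 0 < t → 0 ≤ v1 t := by
    intro t0 ht0
    by_contra hneg
    push_neg at hneg
    have hsub : Ici t0 ⊆ Ici (0:ℝ) := Ici_subset_Ici.mpr ht0.le
    have hmono1 : ∀ t ∈ Ici t0, v1 t ≤ v1 t0 := by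
      intro t ht
      have := decay5 (a := t0) (M := 0)
        (fun s hs => (hv1d s (hsub hs)).mono hsub)
        (fun s hs => by
          have hs0 : 0 < s := lt_trans ht0 hs
          rw [hD1eq s hs0]
          have hxp : 0 < u s ^ (-q - 1) := Real.rpow_pos_of_pos (hupos s hs0.le) _
          have h1 : 0 < q * K * u s ^ (-q - 1) := mul_pos (mul_pos hq0 hK) hxp
          nlinarith [mul_neg_of_neg_of_pos hr0 h1]) t ht
      linarith
    have hvlin : ∀ t ∈ Ici t0, v t ≤ v t0 + v1 t0 * (t - t0) :=
      decay5 (a := t0) (M := v1 t0)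
        (fun s hs => (hvd s (hsub hs)).mono hsub)
        (fun s hs => hmono1 s (Ioi_subset_Ici_self hs))
    have hvt0 : 0 < v t0 := Real.rpow_pos_of_pos (hupos t0 ht0.le) _
    have hv1ne : v1 t0 ≠ 0 := ne_of_lt hneg
    have hTge : t0 ≤ t0 + v t0 / (-v1 t0) + 1 := by
      have h0 : 0 < v t0 / (-v1 t0) := div_pos hvt0 (by linarith)
      linarith
    have h := hvlin _ (mem_Ici.mpr hTge)
    have hvT : 0 < v (t0 + v t0 / (-v1 t0) + 1) :=
      Real.rpow_pos_of_pos (hupos _ (le_trans ht0.le hTge)) _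
    have hcalc : v1 t0 * ((t0 + v t0 / (-v1 t0) + 1) - t0) = -v t0 + v1 t0 := by
      have e : v1 t0 * (v t0 / (-v1 t0)) = -v t0 := by
        rw [div_neg, mul_neg, mul_div_cancel₀ _ hv1ne]
      calc v1 t0 * ((t0 + v t0 / (-v1 t0) + 1) - t0)
          = v1 t0 * (v t0 / (-v1 t0)) + v1 t0 := by ring
        _ = -v t0 + v1 t0 := by rw [e]
    linarith
  -- step (ii): u1 ≤ 0 on (0, ∞), hence u ≤ u 0
  have hu1np : ∀ t, 0 < t → u1 t ≤ 0 := by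
    intro t ht
    have h := hv1nonneg t ht
    simp only [hv1def] at h
    have hxp : 0 < u t ^ (r - 1) := Real.rpow_pos_of_pos (hupos t ht.le) _
    by_contra hpos
    push_neg at hpos
    have h2 : 0 < u1 t * u t ^ (r - 1) := mul_pos hpos hxp
    nlinarith [mul_neg_of_neg_of_pos hr0 h2]
  have humono : ∀ t ∈ Ici (0:ℝ), u t ≤ u 0 := by
    intro t ht
    have := decay5 (a := 0) (M := 0) hud (fun s hs => hu1np s hs) t ht
    linarith
  -- step (iii): uniform negative bound on D1
  set δ : ℝ := -(r * q * K) * u 0 ^ (-q - 1) with hδdef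
  have hrqK : r * q * K < 0 := by
    have : 0 < q * K := mul_pos hq0 hK
    nlinarith
  have hδ : 0 < δ := by
    have h1 : 0 < u 0 ^ (-q - 1) := Real.rpow_pos_of_pos hu00 _
    rw [hδdef]
    nlinarith
  have hD1le : ∀ t ∈ Ioi (0:ℝ), D1 t ≤ -δ := by
    intro t ht
    rw [hD1eq t ht, hδdef]
    have hle : u 0 ^ (-q - 1) ≤ u t ^ (-q - 1) :=
      Real.rpow_le_rpow_of_nonpos (hupos t (Ioi_subset_Ici_self ht)) (humono t (Ioi_subset_Ici_self ht)) (by linarith)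
    nlinarith
  -- final contradiction
  have hfin := decay5 (a := 0) (M := -δ) hv1d hD1le
  have hv10 : 0 < v1 0 := by
    simp only [hv1def]
    rw [hinit]
    have h1 : 0 < u 0 ^ q := Real.rpow_pos_of_pos hu00 _
    have h2 : 0 < u 0 ^ (r - 1) := Real.rpow_pos_of_pos hu00 _
    nlinarith [mul_pos (mul_pos (mul_pos hc0 h1) (neg_pos.mpr hr0)) h2]
  set t1 : ℝ := v1 0 / δ + 1 with ht1def
  have ht1 : 0 < t1 := by
    have : 0 < v1 0 / δ := by positivity
    simp only [ht1def]; linarith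
  have h := hfin t1 (le_of_lt ht1)
  have hcalc : -δ * (t1 - 0) = -(v1 0) - δ := by
    simp only [ht1def]
    field_simp
    ring
  have := hv1nonneg t1 ht1
  nlinarith
end
end

section
/- Let $n\geq 3$, $\tau>0$, $\alpha>0$, $p>1$, $q\geq 1$, and let $v\in C^2(H)\cap C^1(\bar H\setminus\{0\})$ be positive and satisfy $\Delta v=|x|^{\tau}v^p$ in $H$ and $\partial v/\partial t=-|x|^{-\alpha}v^q$ on $\partial H\setminus\{0\}$. Then for any $\epsilon$ with $0<\epsilon<\min\{1,\min_{\partial B_1^+\cap\partial B_1}v\}$, one has $v(x)\geq\epsilon/2$ for all $x\in\overline{B_1^+}\setminus\{0\}$, where $B_1^+=\{x\in H:|x|<1\}$. -/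
open Filter Set Topology


lemma quad_poly_hasDerivAt (A B : ℝ) (s0 : ℝ) :
    HasDerivAt (fun s : ℝ => A + B * s + s ^ 2) (B + 2 * s0) s0 := by
  have h : HasDerivAt (fun s : ℝ => A + B * s + s ^ 2) (0 + B * 1 + 2 * s0 ^ 1) s0 :=
    ((hasDerivAt_const s0 A).add ((hasDerivAt_id s0).const_mul B)).add (hasDerivAt_pow 2 s0)
  convert h using 1; ring

lemma quadG_hasDerivAt (A B c K η μ : ℝ) {s0 : ℝ} (hpos : 0 < A + B * s0 + s0 ^ 2) :
    HasDerivAt (fun s : ℝ => K - η * (A + B * s + s ^ 2) ^ c + μ * s ^ 2)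
      (-(η * ((B + 2 * s0) * c * (A + B * s0 + s0 ^ 2) ^ (c - 1))) + μ * (2 * s0)) s0 := by
  have h1 : HasDerivAt (fun s : ℝ => (A + B * s + s ^ 2) ^ c)
      ((B + 2 * s0) * c * (A + B * s0 + s0 ^ 2) ^ (c - 1)) s0 :=
    (quad_poly_hasDerivAt A B s0).rpow_const (Or.inl hpos.ne')
  have h2 := ((hasDerivAt_const s0 K).sub (h1.const_mul η)).add ((hasDerivAt_pow 2 s0).const_mul μ)
  exact h2.congr_deriv (by ring)

lemma quadG_contDiffAt (A B c K η μ : ℝ) {s0 : ℝ} (hpos : 0 < A + B * s0 + s0 ^ 2) :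
    ContDiffAt ℝ 2 (fun s : ℝ => K - η * (A + B * s + s ^ 2) ^ c + μ * s ^ 2) s0 := by
  have hpoly : ContDiff ℝ 2 (fun s : ℝ => A + B * s + s ^ 2) := by
    apply ContDiff.add; apply ContDiff.add contDiff_const
    · exact contDiff_const.mul contDiff_id
    · exact contDiff_id.pow 2
  have h1 : ContDiffAt ℝ 2 (fun s : ℝ => (A + B * s + s ^ 2) ^ c) s0 :=
    hpoly.contDiffAt.rpow_const_of_ne hpos.ne'
  exact (contDiffAt_const.sub (contDiffAt_const.mul h1)).add
    (contDiffAt_const.mul (contDiff_id.pow 2).contDiffAt)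

lemma quadG_deriv2 (A B c K η μ : ℝ) {s0 : ℝ} (hpos : 0 < A + B * s0 + s0 ^ 2) :
    deriv (deriv (fun s : ℝ => K - η * (A + B * s + s ^ 2) ^ c + μ * s ^ 2)) s0
      = -(η * (c * (c - 1) * (A + B * s0 + s0 ^ 2) ^ (c - 2) * (B + 2 * s0) ^ 2
          + 2 * c * (A + B * s0 + s0 ^ 2) ^ (c - 1))) + 2 * μ := by
  have hev : ∀ᶠ s in nhds s0, 0 < A + B * s + s ^ 2 := by
    have hc : Continuous (fun s : ℝ => A + B * s + s ^ 2) := by fun_prop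
    exact (hc.tendsto s0).eventually_const_lt hpos
  have hd : deriv (fun s : ℝ => K - η * (A + B * s + s ^ 2) ^ c + μ * s ^ 2)
      =ᶠ[nhds s0] fun s => -(η * ((B + 2 * s) * c * (A + B * s + s ^ 2) ^ (c - 1))) + μ * (2 * s) := by
    filter_upwards [hev] with s hs
    exact (quadG_hasDerivAt A B c K η μ hs).deriv
  rw [hd.deriv_eq]
  have h1 : HasDerivAt (fun s : ℝ => (A + B * s + s ^ 2) ^ (c - 1))
      ((B + 2 * s0) * (c - 1) * (A + B * s0 + s0 ^ 2) ^ (c - 1 - 1)) s0 :=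
    (quad_poly_hasDerivAt A B s0).rpow_const (Or.inl hpos.ne')
  have h2 : HasDerivAt (fun s : ℝ => (B + 2 * s) * c * (A + B * s + s ^ 2) ^ (c - 1))
      ((2 * c) * (A + B * s0 + s0 ^ 2) ^ (c - 1)
        + (B + 2 * s0) * c * ((B + 2 * s0) * (c - 1) * (A + B * s0 + s0 ^ 2) ^ (c - 1 - 1))) s0 := by
    have hb : HasDerivAt (fun s : ℝ => (B + 2 * s) * c) (2 * c) s0 := by
      have := ((hasDerivAt_const s0 B).add ((hasDerivAt_id s0).const_mul 2)).mul_const c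
      exact this.congr_deriv (by ring)
    have := hb.mul h1
    exact this
  have h3 := (h2.const_mul η).neg.add ((hasDerivAt_id s0).const_mul 2 |>.const_mul μ)
  have h4 : HasDerivAt (fun s : ℝ => -(η * ((B + 2 * s) * c * (A + B * s + s ^ 2) ^ (c - 1))) + μ * (2 * s))
      (-(η * (c * (c - 1) * (A + B * s0 + s0 ^ 2) ^ (c - 2) * (B + 2 * s0) ^ 2
          + 2 * c * (A + B * s0 + s0 ^ 2) ^ (c - 1))) + 2 * μ) s0 := by
    have heq2 : (A + B * s0 + s0 ^ 2) ^ (c - 1 - 1) = (A + B * s0 + s0 ^ 2) ^ (c - 2) := by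
      ring_nf
    refine h3.congr_deriv ?_
    rw [heq2]; ring
  exact h4.deriv

lemma norm_line {m : ℕ} (x : EuclideanSpace ℝ (Fin m)) (i : Fin m) (s : ℝ) :
    ‖x + s • EuclideanSpace.single i (1 : ℝ)‖ ^ 2 = (‖x‖ ^ 2) + (2 * x i) * s + s ^ 2 := by
  rw [norm_add_sq_real, real_inner_smul_right, EuclideanSpace.inner_single_right, norm_smul,
    EuclideanSpace.norm_single]
  simp [mul_pow, sq_abs]
  ring

lemma norm_sq_sum {m : ℕ} (x : EuclideanSpace ℝ (Fin m)) :
    ‖x‖ ^ 2 = ∑ i : Fin m, (x i) ^ 2 := by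
  rw [EuclideanSpace.norm_eq, Real.sq_sqrt]
  · simp [Real.norm_eq_abs, sq_abs]
  · positivity

lemma phi_lap (n : ℕ) (hn : 3 ≤ n) (ε η : ℝ) {c : ℝ} (hc : c = (2 - (n : ℝ)) / 2)
    (x : EuclideanSpace ℝ (Fin (n - 1))) (t : ℝ) (hA : 0 < ‖x‖ ^ 2 + t ^ 2) :
    (∑ i : Fin (n - 1), deriv (deriv (fun s : ℝ =>
        ε / 2 - η * (‖x + s • EuclideanSpace.single i (1 : ℝ)‖ ^ 2 + t ^ 2) ^ c
          + ε / 2 * t ^ 2)) 0)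
      + deriv (deriv (fun s : ℝ =>
        ε / 2 - η * (‖x‖ ^ 2 + s ^ 2) ^ c + ε / 2 * s ^ 2)) t = ε := by
  subst hc
  set c : ℝ := (2 - (n : ℝ)) / 2 with hc
  set A : ℝ := ‖x‖ ^ 2 + t ^ 2 with hAdef
  -- i-lines
  have hterm : ∀ i : Fin (n - 1), deriv (deriv (fun s : ℝ =>
      ε / 2 - η * (‖x + s • EuclideanSpace.single i (1 : ℝ)‖ ^ 2 + t ^ 2) ^ c
        + ε / 2 * t ^ 2)) 0
      = -(η * (c * (c - 1) * A ^ (c - 2) * (2 * x i) ^ 2 + 2 * c * A ^ (c - 1))) := by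
    intro i
    have hbase : ∀ s : ℝ, ‖x + s • EuclideanSpace.single i (1 : ℝ)‖ ^ 2 + t ^ 2
        = A + (2 * x i) * s + s ^ 2 := by
      intro s; rw [norm_line]; ring
    have hline : (fun s : ℝ =>
        ε / 2 - η * (‖x + s • EuclideanSpace.single i (1 : ℝ)‖ ^ 2 + t ^ 2) ^ c + ε / 2 * t ^ 2)
        = fun s : ℝ => (ε / 2 + ε / 2 * t ^ 2) - η * (A + (2 * x i) * s + s ^ 2) ^ c
            + 0 * s ^ 2 := by
      funext s; rw [hbase s]; ring
    rw [hline, quadG_deriv2 A (2 * x i) c _ η 0 (by simpa using hA)]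
    norm_num
  have htermt : deriv (deriv (fun s : ℝ =>
      ε / 2 - η * (‖x‖ ^ 2 + s ^ 2) ^ c + ε / 2 * s ^ 2)) t
      = -(η * (c * (c - 1) * A ^ (c - 2) * (2 * t) ^ 2 + 2 * c * A ^ (c - 1))) + ε := by
    have hline : (fun s : ℝ => ε / 2 - η * (‖x‖ ^ 2 + s ^ 2) ^ c + ε / 2 * s ^ 2)
        = fun s : ℝ => ε / 2 - η * (‖x‖ ^ 2 + 0 * s + s ^ 2) ^ c + (ε / 2) * s ^ 2 := by
      funext s; norm_num
    have hpos : (0:ℝ) < ‖x‖ ^ 2 + 0 * t + t ^ 2 := by simpa using hA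
    rw [hline, quadG_deriv2 (‖x‖ ^ 2) 0 c _ η (ε/2) hpos]
    have hb : ‖x‖ ^ 2 + 0 * t + t ^ 2 = A := by rw [hAdef]; ring
    rw [hb]
    norm_num
    ring
  rw [htermt, Finset.sum_congr rfl (fun i _ => hterm i)]
  -- now pure algebra
  have hsum : ∑ i : Fin (n - 1),
      -(η * (c * (c - 1) * A ^ (c - 2) * (2 * x i) ^ 2 + 2 * c * A ^ (c - 1)))
      = -(η * (c * (c - 1) * A ^ (c - 2) * (4 * ‖x‖ ^ 2)
          + (n - 1 : ℝ) * (2 * c * A ^ (c - 1)))) := by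
    have h1 : ∀ i : Fin (n - 1),
        -(η * (c * (c - 1) * A ^ (c - 2) * (2 * x i) ^ 2 + 2 * c * A ^ (c - 1)))
        = (-(η * (c * (c - 1) * A ^ (c - 2) * 4))) * (x i) ^ 2
          + (-(η * (2 * c * A ^ (c - 1)))) := by intro i; ring
    rw [Finset.sum_congr rfl (fun i _ => h1 i), Finset.sum_add_distrib, ← Finset.mul_sum,
      ← norm_sq_sum, Finset.sum_const, Finset.card_univ, Fintype.card_fin, nsmul_eq_mul]
    have hcast : ((n - 1 : ℕ) : ℝ) = (n : ℝ) - 1 := by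
      have : (1:ℕ) ≤ n := by omega
      push_cast [Nat.cast_sub this]; ring
    rw [hcast]; ring
  rw [hsum]
  -- combine: A^(c-2) * A = A^(c-1)
  have hAc : A ^ (c - 2) * A = A ^ (c - 1) := by
    calc A ^ (c - 2) * A = A ^ (c - 2) * A ^ (1:ℝ) := by rw [Real.rpow_one]
    _ = A ^ (c - 2 + 1) := (Real.rpow_add hA _ _).symm
    _ = A ^ (c - 1) := by ring_nf
  have hkey : -(η * (c * (c - 1) * A ^ (c - 2) * (4 * ‖x‖ ^ 2)
        + (n - 1 : ℝ) * (2 * c * A ^ (c - 1))))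
      + (-(η * (c * (c - 1) * A ^ (c - 2) * (2 * t) ^ 2 + 2 * c * A ^ (c - 1))) + ε) = ε := by
    have hexp : c * (c - 1) * A ^ (c - 2) * (4 * ‖x‖ ^ 2)
        + c * (c - 1) * A ^ (c - 2) * (2 * t) ^ 2
        = 4 * (c * (c - 1)) * (A ^ (c - 2) * A) := by rw [hAdef]; ring
    have hzero : 4 * (c * (c - 1)) * A ^ (c - 1)
        + (n - 1 : ℝ) * (2 * c * A ^ (c - 1)) + 2 * c * A ^ (c - 1) = 0 := by
      have : (4 * (c * (c - 1)) + (n - 1 : ℝ) * (2 * c) + 2 * c) = 0 := by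
        rw [hc]; ring
      calc 4 * (c * (c - 1)) * A ^ (c - 1) + (n - 1 : ℝ) * (2 * c * A ^ (c - 1))
            + 2 * c * A ^ (c - 1)
          = (4 * (c * (c - 1)) + (n - 1 : ℝ) * (2 * c) + 2 * c) * A ^ (c - 1) := by ring
        _ = 0 := by rw [this]; ring
    linear_combination (-η) * hexp - η * (4 * (c * (c - 1))) * hAc - η * hzero
  linarith [hkey]

lemma contDiffAt_open_nbhd {f : ℝ → ℝ} {a : ℝ} (hf : ContDiffAt ℝ 2 f a) :
    ∃ u : Set ℝ, IsOpen u ∧ a ∈ u ∧ ContDiffOn ℝ 2 f u := by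
  obtain ⟨u, hu, hcu⟩ := hf.contDiffOn le_rfl (by simp)
  obtain ⟨t, hts, ht, hat⟩ := mem_nhds_iff.mp hu
  exact ⟨t, ht, hat, hcu.mono hts⟩

lemma deriv_diffAt_of_contDiffAt {f : ℝ → ℝ} {a : ℝ} (hf : ContDiffAt ℝ 2 f a) :
    DifferentiableAt ℝ (deriv f) a := by
  obtain ⟨u, hou, hau, hcu⟩ := contDiffAt_open_nbhd hf
  have h1 : ContDiffOn ℝ 1 (deriv f) u := hcu.deriv_of_isOpen hou (by norm_num)
  exact ((h1.contDiffAt (hou.mem_nhds hau)).differentiableAt one_ne_zero)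

lemma deriv2_sub {f g : ℝ → ℝ} {a : ℝ} (hf : ContDiffAt ℝ 2 f a) (hg : ContDiffAt ℝ 2 g a) :
    deriv (deriv (fun s => f s - g s)) a = deriv (deriv f) a - deriv (deriv g) a := by
  obtain ⟨u, hou, hau, hcu⟩ := contDiffAt_open_nbhd hf
  obtain ⟨u', hou', hau', hcu'⟩ := contDiffAt_open_nbhd hg
  have hev : deriv (fun s => f s - g s) =ᶠ[nhds a] fun s => deriv f s - deriv g s := by
    filter_upwards [hou.mem_nhds hau, hou'.mem_nhds hau'] with y hy hy'
    exact deriv_sub ((hcu.contDiffAt (hou.mem_nhds hy)).differentiableAt two_ne_zero)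
      ((hcu'.contDiffAt (hou'.mem_nhds hy')).differentiableAt two_ne_zero)
  rw [hev.deriv_eq]; exact deriv_sub (deriv_diffAt_of_contDiffAt hf) (deriv_diffAt_of_contDiffAt hg)

lemma second_deriv_test {f : ℝ → ℝ} {a : ℝ} (hf : ContDiffAt ℝ 2 f a)
    (hmin : IsLocalMin f a) : 0 ≤ deriv (deriv f) a := by
  by_contra hneg
  push_neg at hneg
  obtain ⟨u, hou, hau, hcu⟩ := contDiffAt_open_nbhd hf
  have hd1 : deriv f a = 0 := hmin.deriv_eq_zero
  have hdd : HasDerivAt (deriv f) (deriv (deriv f) a) a :=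
    (deriv_diffAt_of_contDiffAt hf).hasDerivAt
  have hslope := hasDerivAt_iff_tendsto_slope.mp hdd
  have hs2 : ∀ᶠ t in nhdsWithin a (Ioi a), slope (deriv f) a t < 0 :=
    (hslope.mono_left (nhdsWithin_mono a (fun x hx => ne_of_gt hx))).eventually_lt_const hneg
  have hs3 : ∀ᶠ t in nhdsWithin a (Ioi a), deriv f t < 0 := by
    filter_upwards [hs2, self_mem_nhdsWithin] with t ht (ht2 : a < t)
    rw [slope_def_field, hd1, sub_zero] at ht
    rcases div_neg_iff.mp ht with ⟨h1, h2⟩ | ⟨h1, h2⟩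
    · linarith
    · exact h1
  obtain ⟨δ1, hδ1, hball⟩ := Metric.isOpen_iff.mp hou a hau
  obtain ⟨δ2, hδ2, hminb⟩ := Metric.eventually_nhds_iff.mp hmin
  obtain ⟨ww, hw, hwsub⟩ := (mem_nhdsGT_iff_exists_Ioo_subset).mp hs3
  set δ : ℝ := min (min (δ1 / 2) (δ2 / 2)) ((ww - a) / 2) with hδdef
  have hδpos : 0 < δ := by
    have : a < ww := hw
    simp only [hδdef, lt_min_iff]
    refine ⟨⟨by linarith, by linarith⟩, by linarith⟩
  have hIccu : Icc a (a + δ) ⊆ u := by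
    intro x hx
    apply hball
    simp only [Metric.mem_ball, Real.dist_eq, abs_lt]
    have h1 : δ ≤ δ1 / 2 := le_trans (min_le_left _ _) (min_le_left _ _)
    constructor <;> [linarith [hx.1, hx.2]; linarith [hx.1, hx.2]]
  have hanti : StrictAntiOn f (Icc a (a + δ)) := by
    apply strictAntiOn_of_deriv_neg (convex_Icc _ _) (hcu.continuousOn.mono hIccu)
    intro x hx
    rw [interior_Icc] at hx
    apply hwsub
    have h3 : δ ≤ (ww - a) / 2 := min_le_right _ _
    exact ⟨hx.1, by linarith [hx.2]⟩
  have h4 : f (a + δ) < f a :=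
    hanti (left_mem_Icc.mpr (by linarith)) (right_mem_Icc.mpr (by linarith)) (by linarith)
  have h5 : f a ≤ f (a + δ) := by
    apply hminb
    simp only [Real.dist_eq]
    have h1 : δ ≤ δ2 / 2 := le_trans (min_le_left _ _) (min_le_right _ _)
    rw [abs_lt]; constructor <;> linarith
  linarith


noncomputable section

/-- Laplacian (in all `m+1` variables) of a function on the half-space written in
coordinates `(x', t)` with `x' : ℝ^m` and `t : ℝ`. -/
noncomputable def lapH {m : ℕ} (u : EuclideanSpace ℝ (Fin m) → ℝ → ℝ)
    (x : EuclideanSpace ℝ (Fin m)) (t : ℝ) : ℝ :=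
  (∑ i : Fin m, deriv (deriv (fun s : ℝ => u (x + s • EuclideanSpace.single i (1 : ℝ)) t)) 0)
    + deriv (deriv (fun s : ℝ => u x s)) t

set_option maxHeartbeats 1000000 in
theorem stmt8 (n : ℕ) (hn : 3 ≤ n) (τ α p q : ℝ)
    (hτ : 0 < τ) (hα : 0 < α) (hp : 1 < p) (hq : 1 ≤ q)
    (v : EuclideanSpace ℝ (Fin (n - 1)) → ℝ → ℝ)
    (hv2 : ContDiffOn ℝ 2 (fun z : EuclideanSpace ℝ (Fin (n - 1)) × ℝ => v z.1 z.2)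
      {z : EuclideanSpace ℝ (Fin (n - 1)) × ℝ | 0 < z.2})
    (hv1 : ContDiffOn ℝ 1 (fun z : EuclideanSpace ℝ (Fin (n - 1)) × ℝ => v z.1 z.2)
      ({z : EuclideanSpace ℝ (Fin (n - 1)) × ℝ | 0 ≤ z.2} \ {0}))
    (hpos : ∀ (x' : EuclideanSpace ℝ (Fin (n - 1))) (t : ℝ), 0 ≤ t →
      ‖x'‖ ^ 2 + t ^ 2 ≠ 0 → 0 < v x' t)
    (heq : ∀ (x' : EuclideanSpace ℝ (Fin (n - 1))) (t : ℝ), 0 < t →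
      lapH v x' t = (‖x'‖ ^ 2 + t ^ 2) ^ (τ / 2) * v x' t ^ p)
    (hbc : ∀ x' : EuclideanSpace ℝ (Fin (n - 1)), x' ≠ 0 →
      deriv (fun t => v x' t) 0 = -((‖x'‖ ^ 2) ^ (-(α / 2)) * v x' 0 ^ q)) :
    ∀ ε : ℝ, 0 < ε → ε < 1 →
      (∀ (x' : EuclideanSpace ℝ (Fin (n - 1))) (t : ℝ), 0 ≤ t →
        ‖x'‖ ^ 2 + t ^ 2 = 1 → ε < v x' t) →
      ∀ (x' : EuclideanSpace ℝ (Fin (n - 1))) (t : ℝ), 0 ≤ t →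
        ‖x'‖ ^ 2 + t ^ 2 ≤ 1 → ‖x'‖ ^ 2 + t ^ 2 ≠ 0 →
        ε / 2 ≤ v x' t := by
  intro ε hε0 hε1 hbd x'0 t0 ht0 hR1 hRne
  by_contra hcon
  push_neg at hcon
  set δ : ℝ := (ε / 2 - v x'0 t0) / 2 with hδdef
  have hδpos : 0 < δ := by rw [hδdef]; linarith
  suffices key : ε / 2 - δ ≤ v x'0 t0 by rw [hδdef] at key; linarith
  have hR0 : 0 < ‖x'0‖ ^ 2 + t0 ^ 2 := lt_of_le_of_ne (by positivity) (Ne.symm hRne)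
  set c : ℝ := (2 - (n : ℝ)) / 2 with hcdef
  have hn3 : (3 : ℝ) ≤ (n : ℝ) := by exact_mod_cast hn
  have hc0 : c < 0 := by rw [hcdef]; linarith
  set R : ℝ := ‖x'0‖ ^ 2 + t0 ^ 2 with hRdef
  have hRc : 0 < R ^ c := Real.rpow_pos_of_pos hR0 c
  set η : ℝ := δ / R ^ c with hηdef
  have hη0 : 0 < η := div_pos hδpos hRc
  have hηR : η * R ^ c = δ := div_mul_cancel₀ _ hRc.ne'
  set ρ0 : ℝ := min ((ε / η) ^ (1 / c)) R with hρ0def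
  have hρ0pos : 0 < ρ0 := lt_min (Real.rpow_pos_of_pos (div_pos hε0 hη0) _) hR0
  have hρ01 : ρ0 ≤ 1 := le_trans (min_le_right _ _) hR1
  have hρ0R : ρ0 ≤ R := min_le_right _ _
  have hinner : ε ≤ η * ρ0 ^ c := by
    have h1 : ρ0 ≤ (ε / η) ^ (1 / c) := min_le_left _ _
    have h2 : ((ε / η) ^ (1 / c)) ^ c ≤ ρ0 ^ c :=
      Real.rpow_le_rpow_of_nonpos hρ0pos h1 hc0.le
    have h3 : ((ε / η) ^ (1 / c)) ^ c = ε / η := by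
      rw [← Real.rpow_mul (div_pos hε0 hη0).le, one_div, inv_mul_cancel₀ hc0.ne, Real.rpow_one]
    rw [h3] at h2
    calc ε = η * (ε / η) := by field_simp
    _ ≤ η * ρ0 ^ c := by nlinarith
  set φ : EuclideanSpace ℝ (Fin (n - 1)) × ℝ → ℝ :=
    fun z => ε / 2 - η * (‖z.1‖ ^ 2 + z.2 ^ 2) ^ c + ε / 2 * z.2 ^ 2 with hφdef
  set w : EuclideanSpace ℝ (Fin (n - 1)) × ℝ → ℝ :=
    fun z => v z.1 z.2 - φ z with hwdef
  set S : Set (EuclideanSpace ℝ (Fin (n - 1)) × ℝ) :=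
    {z | 0 ≤ z.2 ∧ ρ0 ≤ ‖z.1‖ ^ 2 + z.2 ^ 2 ∧ ‖z.1‖ ^ 2 + z.2 ^ 2 ≤ 1} with hSdef
  have hρcont : Continuous (fun z : EuclideanSpace ℝ (Fin (n - 1)) × ℝ => ‖z.1‖ ^ 2 + z.2 ^ 2) := by
    fun_prop
  have hSmem : ∀ z : EuclideanSpace ℝ (Fin (n - 1)) × ℝ,
      z ∈ S ↔ 0 ≤ z.2 ∧ ρ0 ≤ ‖z.1‖ ^ 2 + z.2 ^ 2 ∧ ‖z.1‖ ^ 2 + z.2 ^ 2 ≤ 1 := fun z => Iff.rfl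
  have hφlt : ∀ z ∈ S, φ z < ε := by
    intro z hz
    obtain ⟨h1, h2, h3⟩ := (hSmem z).mp hz
    have h4 : 0 < (‖z.1‖ ^ 2 + z.2 ^ 2) ^ c :=
      Real.rpow_pos_of_pos (lt_of_lt_of_le hρ0pos h2) c
    have h5 : z.2 ^ 2 ≤ 1 := by nlinarith [sq_nonneg ‖z.1‖]
    simp only [hφdef]
    nlinarith
  have hSclosed : IsClosed S := by
    have h1 : S = (fun z : EuclideanSpace ℝ (Fin (n - 1)) × ℝ => z.2) ⁻¹' (Ici 0)
        ∩ ((fun z : EuclideanSpace ℝ (Fin (n - 1)) × ℝ => ‖z.1‖ ^ 2 + z.2 ^ 2) ⁻¹' (Ici ρ0)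
          ∩ (fun z : EuclideanSpace ℝ (Fin (n - 1)) × ℝ => ‖z.1‖ ^ 2 + z.2 ^ 2) ⁻¹' (Iic 1)) := by
      ext z; simp [hSdef, and_assoc]
    rw [h1]
    exact (isClosed_Ici.preimage continuous_snd).inter
      ((isClosed_Ici.preimage hρcont).inter (isClosed_Iic.preimage hρcont))
  have hSbdd : Bornology.IsBounded S := by
    rw [isBounded_iff_forall_norm_le]
    refine ⟨1, fun z hz => ?_⟩
    obtain ⟨h1, h2, h3⟩ := (hSmem z).mp hz
    have h4 : ‖z.1‖ ≤ 1 := by nlinarith [norm_nonneg z.1, sq_nonneg z.2]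
    have h5 : ‖z.2‖ ≤ 1 := by
      rw [Real.norm_eq_abs]
      nlinarith [abs_nonneg z.2, sq_abs z.2, sq_nonneg ‖z.1‖]
    rw [Prod.norm_def]
    exact max_le h4 h5
  have hScompact : IsCompact S := Metric.isCompact_of_isClosed_isBounded hSclosed hSbdd
  have htargetS : (x'0, t0) ∈ S := (hSmem _).mpr ⟨ht0, hρ0R, hR1⟩
  have hSsub : S ⊆ ({z : EuclideanSpace ℝ (Fin (n - 1)) × ℝ | 0 ≤ z.2} \ {0}) := by
    intro z hz
    obtain ⟨h1, h2, h3⟩ := (hSmem z).mp hz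
    refine ⟨h1, ?_⟩
    simp only [Set.mem_singleton_iff]
    intro h0
    rw [h0] at h2
    simp at h2
    linarith
  have hwcont : ContinuousOn w S := by
    apply ContinuousOn.sub
    · exact hv1.continuousOn.mono hSsub
    · apply ContinuousOn.add
      · apply ContinuousOn.sub continuousOn_const
        exact continuousOn_const.mul (hρcont.continuousOn.rpow_const
          (fun z hz => Or.inl (ne_of_gt (lt_of_lt_of_le hρ0pos ((hSmem z).mp hz).2.1))))
      · exact continuousOn_const.mul (by fun_prop)
  obtain ⟨z0, hz0S, hz0min⟩ := hScompact.exists_isMinOn ⟨(x'0, t0), htargetS⟩ hwcont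
  have hmin' : ∀ z ∈ S, w z0 ≤ w z := fun z hz => isMinOn_iff.mp hz0min z hz
  obtain ⟨hz0t, hz0ρa, hz0ρb⟩ := (hSmem z0).mp hz0S
  have hA0 : 0 < ‖z0.1‖ ^ 2 + z0.2 ^ 2 := lt_of_lt_of_le hρ0pos hz0ρa
  have hvz0pos : 0 < v z0.1 z0.2 := hpos z0.1 z0.2 hz0t hA0.ne'
  have hw0 : 0 ≤ w z0 := by
    by_contra hneg
    push_neg at hneg
    have hne1 : ‖z0.1‖ ^ 2 + z0.2 ^ 2 ≠ 1 := by
      intro h1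
      have h2 := hbd z0.1 z0.2 hz0t h1
      have h3 := hφlt z0 hz0S
      simp only [hwdef] at hneg
      linarith
    have hneρ0 : ρ0 < ‖z0.1‖ ^ 2 + z0.2 ^ 2 := by
      rcases eq_or_lt_of_le hz0ρa with h1 | h1
      · exfalso
        have ht21 : z0.2 ^ 2 ≤ 1 := by nlinarith [sq_nonneg ‖z0.1‖]
        have hφ0 : φ z0 ≤ 0 := by
          simp only [hφdef]
          rw [← h1]
          nlinarith
        simp only [hwdef] at hneg
        linarith
      · exact h1
    have hA1 : ‖z0.1‖ ^ 2 + z0.2 ^ 2 < 1 := lt_of_le_of_ne hz0ρb hne1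
    have hvlt : v z0.1 z0.2 < ε := by
      have := hφlt z0 hz0S
      simp only [hwdef] at hneg
      linarith
    rcases eq_or_lt_of_le hz0t with hbdy | hint
    · -- boundary case z0.2 = 0
      have hx0 : z0.1 ≠ 0 := by
        intro h0
        rw [h0] at hA0
        rw [← hbdy] at hA0
        simp at hA0
      have hxpos : 0 < ‖z0.1‖ ^ 2 := by
        have : ‖z0.1‖ ^ 2 = ‖z0.1‖ ^ 2 + z0.2 ^ 2 := by rw [← hbdy]; ring
        rw [this]; exact hA0
      have hv00 : 0 < v z0.1 0 := hpos z0.1 0 le_rfl (by simpa using hxpos.ne')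
      have hdneg : deriv (fun t => v z0.1 t) 0 < 0 := by
        rw [hbc z0.1 hx0]
        have h1 : 0 < (‖z0.1‖ ^ 2) ^ (-(α / 2)) := Real.rpow_pos_of_pos hxpos _
        have h2 : 0 < v z0.1 0 ^ q := Real.rpow_pos_of_pos hv00 _
        nlinarith
      have hdiff : DifferentiableAt ℝ (fun t => v z0.1 t) 0 := by
        by_contra hnd
        rw [deriv_zero_of_not_differentiableAt hnd] at hdneg
        exact lt_irrefl 0 hdneg
      have hφline : (fun s : ℝ => φ (z0.1, s))
          = fun s : ℝ => ε / 2 - η * (‖z0.1‖ ^ 2 + 0 * s + s ^ 2) ^ c + ε / 2 * s ^ 2 := by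
        funext s; simp only [hφdef]; norm_num
      have hφt : HasDerivAt (fun s : ℝ => φ (z0.1, s)) 0 0 := by
        rw [hφline]
        have h := quadG_hasDerivAt (‖z0.1‖ ^ 2) 0 c (ε / 2) η (ε / 2) (s0 := 0)
          (by simpa using hxpos)
        convert h using 1
        norm_num
      have hg : HasDerivAt (fun s : ℝ => v z0.1 s - φ (z0.1, s))
          (deriv (fun t => v z0.1 t) 0) 0 := by
        exact (hdiff.hasDerivAt.sub hφt).congr_deriv (sub_zero _)
      have hslope := hasDerivAt_iff_tendsto_slope.mp hg
      have hsl' := hslope.mono_left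
        (nhdsWithin_mono (0 : ℝ) (fun y (hy : y ∈ Ioi (0 : ℝ)) => ne_of_gt hy))
      have hev1 : ∀ᶠ s in nhdsWithin (0 : ℝ) (Ioi 0),
          slope (fun s : ℝ => v z0.1 s - φ (z0.1, s)) 0 s < 0 :=
        hsl'.eventually_lt_const hdneg
      have hca : Continuous (fun s : ℝ => ‖z0.1‖ ^ 2 + s ^ 2) := by fun_prop
      have hval : ‖z0.1‖ ^ 2 + (0 : ℝ) ^ 2 = ‖z0.1‖ ^ 2 + z0.2 ^ 2 := by rw [← hbdy]
      have hev2 : ∀ᶠ s in nhds (0 : ℝ), ρ0 < ‖z0.1‖ ^ 2 + s ^ 2 :=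
        (hca.tendsto 0).eventually_const_lt (by rw [hval]; exact hneρ0)
      have hev3 : ∀ᶠ s in nhds (0 : ℝ), ‖z0.1‖ ^ 2 + s ^ 2 < 1 :=
        (hca.tendsto 0).eventually_lt_const (by rw [hval]; exact hA1)
      have hev4 : ∀ᶠ s in nhdsWithin (0 : ℝ) (Ioi 0), (z0.1, s) ∈ S := by
        filter_upwards [hev2.filter_mono nhdsWithin_le_nhds, hev3.filter_mono nhdsWithin_le_nhds,
          self_mem_nhdsWithin] with s h2 h3 h4
        exact (hSmem _).mpr ⟨(le_of_lt h4), h2.le, h3.le⟩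
      obtain ⟨s, ⟨hs1, hs2⟩, hs3⟩ := ((hev1.and hev4).and self_mem_nhdsWithin).exists
      have hs3' : (0 : ℝ) < s := hs3
      rw [slope_def_field] at hs1
      have hz0eq : z0 = (z0.1, 0) := by
        rw [Prod.ext_iff]
        exact ⟨rfl, hbdy.symm⟩
      have hminS := hmin' (z0.1, s) hs2
      have hwz0 : w z0 = v z0.1 0 - φ (z0.1, 0) := by rw [hz0eq]
      have hws : w (z0.1, s) = v z0.1 s - φ (z0.1, s) := rfl
      rw [hwz0, hws] at hminS
      have hdenom : (0 : ℝ) < s - 0 := by linarith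
      rcases div_neg_iff.mp hs1 with ⟨ha, hb⟩ | ⟨ha, hb⟩
      · linarith
      · linarith

    · -- interior case 0 < z0.2
      have hCDv : ContDiffAt ℝ 2 (fun z : EuclideanSpace ℝ (Fin (n - 1)) × ℝ => v z.1 z.2) z0 :=
        hv2.contDiffAt ((isOpen_lt continuous_const continuous_snd).mem_nhds hint)
      have hIneq : ∀ i : Fin (n - 1),
          deriv (deriv (fun s : ℝ => ε / 2 - η *
              (‖z0.1 + s • EuclideanSpace.single i (1 : ℝ)‖ ^ 2 + z0.2 ^ 2) ^ c
              + ε / 2 * z0.2 ^ 2)) 0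
          ≤ deriv (deriv (fun s : ℝ =>
              v (z0.1 + s • EuclideanSpace.single i (1 : ℝ)) z0.2)) 0 := by
        intro i
        set e : EuclideanSpace ℝ (Fin (n - 1)) := EuclideanSpace.single i (1 : ℝ) with hedef
        set Vi : ℝ → ℝ := fun s => v (z0.1 + s • e) z0.2 with hVid
        set Gi : ℝ → ℝ := fun s =>
          ε / 2 - η * (‖z0.1 + s • e‖ ^ 2 + z0.2 ^ 2) ^ c + ε / 2 * z0.2 ^ 2 with hGid
        have hbase : ∀ s : ℝ, ‖z0.1 + s • e‖ ^ 2 + z0.2 ^ 2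
            = (‖z0.1‖ ^ 2 + z0.2 ^ 2) + (2 * z0.1 i) * s + s ^ 2 := by
          intro s; rw [hedef, norm_line]; ring
        have hGq : Gi = fun s => (ε / 2 + ε / 2 * z0.2 ^ 2)
            - η * ((‖z0.1‖ ^ 2 + z0.2 ^ 2) + (2 * z0.1 i) * s + s ^ 2) ^ c + 0 * s ^ 2 := by
          funext s; simp only [hGid]; rw [hbase s]; ring
        have hposq : 0 < (‖z0.1‖ ^ 2 + z0.2 ^ 2) + (2 * z0.1 i) * 0 + 0 ^ 2 := by simpa using hA0
        have hGc : ContDiffAt ℝ 2 Gi 0 := by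
          rw [hGq]; exact quadG_contDiffAt _ _ _ _ _ _ hposq
        have hcurve : ContDiff ℝ 2 (fun s : ℝ => (z0.1 + s • e, z0.2)) := by
          apply ContDiff.prodMk
          · exact contDiff_const.add (contDiff_id.smul contDiff_const)
          · exact contDiff_const
        have hVc : ContDiffAt ℝ 2 Vi 0 := by
          have h1 : ContDiffAt ℝ 2 (fun z : EuclideanSpace ℝ (Fin (n - 1)) × ℝ => v z.1 z.2)
              ((fun s : ℝ => (z0.1 + s • e, z0.2)) 0) := by
            have hc0' : (fun s : ℝ => (z0.1 + s • e, z0.2)) 0 = z0 := by simp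
            rw [hc0']; exact hCDv
          exact h1.comp 0 hcurve.contDiffAt
        have hρline : Continuous (fun s : ℝ => ‖z0.1 + s • e‖ ^ 2 + z0.2 ^ 2) := by fun_prop
        have hval0 : ‖z0.1 + (0 : ℝ) • e‖ ^ 2 + z0.2 ^ 2 = ‖z0.1‖ ^ 2 + z0.2 ^ 2 := by simp
        have hev2 : ∀ᶠ s in nhds (0 : ℝ), ρ0 < ‖z0.1 + s • e‖ ^ 2 + z0.2 ^ 2 :=
          (hρline.tendsto 0).eventually_const_lt (by rw [hval0]; exact hneρ0)
        have hev3 : ∀ᶠ s in nhds (0 : ℝ), ‖z0.1 + s • e‖ ^ 2 + z0.2 ^ 2 < 1 :=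
          (hρline.tendsto 0).eventually_lt_const (by rw [hval0]; exact hA1)
        have hlocmin : IsLocalMin (fun s => Vi s - Gi s) 0 := by
          have hev : ∀ᶠ s in nhds (0 : ℝ),
              (fun s => Vi s - Gi s) 0 ≤ (fun s => Vi s - Gi s) s := by
            filter_upwards [hev2, hev3] with s h2 h3
            have hmem : (z0.1 + s • e, z0.2) ∈ S := (hSmem _).mpr ⟨hz0t, h2.le, h3.le⟩
            have h5 := hmin' _ hmem
            have h6 : w (z0.1 + s • e, z0.2) = Vi s - Gi s := by
              simp only [hwdef, hφdef, hVid, hGid]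
            have h7 : w z0 = Vi 0 - Gi 0 := by
              simp only [hwdef, hφdef, hVid, hGid, zero_smul, add_zero]
            simp only [h6, h7] at *
            linarith
          exact hev
        have htest := second_deriv_test (hVc.sub hGc) hlocmin
        have hsub := deriv2_sub hVc hGc
        rw [hsub] at htest
        linarith
      have hIneqT :
          deriv (deriv (fun s : ℝ => ε / 2 - η * (‖z0.1‖ ^ 2 + s ^ 2) ^ c + ε / 2 * s ^ 2)) z0.2
          ≤ deriv (deriv (fun s : ℝ => v z0.1 s)) z0.2 := by
        set Vt : ℝ → ℝ := fun s => v z0.1 s with hVtd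
        set Gt : ℝ → ℝ := fun s =>
          ε / 2 - η * (‖z0.1‖ ^ 2 + s ^ 2) ^ c + ε / 2 * s ^ 2 with hGtd
        have hGq : Gt = fun s => ε / 2 - η * (‖z0.1‖ ^ 2 + 0 * s + s ^ 2) ^ c + ε / 2 * s ^ 2 := by
          funext s; simp only [hGtd]; norm_num
        have hposq : 0 < ‖z0.1‖ ^ 2 + 0 * z0.2 + z0.2 ^ 2 := by simpa using hA0
        have hGc : ContDiffAt ℝ 2 Gt z0.2 := by
          rw [hGq]; exact quadG_contDiffAt _ _ _ _ _ _ hposq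
        have hcurve : ContDiff ℝ 2
            (fun s : ℝ => ((z0.1 : EuclideanSpace ℝ (Fin (n - 1))), s)) :=
          contDiff_const.prodMk contDiff_id
        have hVc : ContDiffAt ℝ 2 Vt z0.2 := by
          have h1 : ContDiffAt ℝ 2 (fun z : EuclideanSpace ℝ (Fin (n - 1)) × ℝ => v z.1 z.2)
              ((fun s : ℝ => ((z0.1 : EuclideanSpace ℝ (Fin (n - 1))), s)) z0.2) := hCDv
          exact h1.comp z0.2 hcurve.contDiffAt
        have hρline : Continuous (fun s : ℝ => ‖z0.1‖ ^ 2 + s ^ 2) := by fun_prop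
        have hev2 : ∀ᶠ s in nhds z0.2, ρ0 < ‖z0.1‖ ^ 2 + s ^ 2 :=
          (hρline.tendsto z0.2).eventually_const_lt hneρ0
        have hev3 : ∀ᶠ s in nhds z0.2, ‖z0.1‖ ^ 2 + s ^ 2 < 1 :=
          (hρline.tendsto z0.2).eventually_lt_const hA1
        have hev4 : ∀ᶠ s in nhds z0.2, (0 : ℝ) < s :=
          (continuous_id.tendsto z0.2).eventually_const_lt hint
        have hlocmin : IsLocalMin (fun s => Vt s - Gt s) z0.2 := by
          have hev : ∀ᶠ s in nhds z0.2,
              (fun s => Vt s - Gt s) z0.2 ≤ (fun s => Vt s - Gt s) s := by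
            filter_upwards [hev2, hev3, hev4] with s h2 h3 h4
            have hmem : ((z0.1 : EuclideanSpace ℝ (Fin (n - 1))), s) ∈ S :=
              (hSmem _).mpr ⟨h4.le, h2.le, h3.le⟩
            have h5 := hmin' _ hmem
            have h6 : w ((z0.1 : EuclideanSpace ℝ (Fin (n - 1))), s) = Vt s - Gt s := by
              simp only [hwdef, hφdef, hVtd, hGtd]
            have h7 : w z0 = Vt z0.2 - Gt z0.2 := by
              simp only [hwdef, hφdef, hVtd, hGtd]
            simp only [h6, h7] at *
            linarith
          exact hev
        have htest := second_deriv_test (hVc.sub hGc) hlocmin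
        have hsub := deriv2_sub hVc hGc
        rw [hsub] at htest
        linarith
      have hlapφ := phi_lap n hn ε η hcdef z0.1 z0.2 hA0
      have hlapv : lapH v z0.1 z0.2 = (∑ i : Fin (n - 1), deriv (deriv (fun s : ℝ =>
            v (z0.1 + s • EuclideanSpace.single i (1 : ℝ)) z0.2)) 0)
          + deriv (deriv (fun s : ℝ => v z0.1 s)) z0.2 := rfl
      have hge : ε ≤ lapH v z0.1 z0.2 := by
        rw [hlapv, ← hlapφ]
        exact add_le_add (Finset.sum_le_sum (fun i _ => hIneq i)) hIneqT
      have hle2 : lapH v z0.1 z0.2 < ε := by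
        rw [heq z0.1 z0.2 hint]
        have h1 : (‖z0.1‖ ^ 2 + z0.2 ^ 2) ^ (τ / 2) ≤ 1 :=
          Real.rpow_le_one hA0.le hz0ρb (by positivity)
        have h3 : v z0.1 z0.2 ≤ 1 := le_of_lt (lt_trans hvlt hε1)
        have h2 : v z0.1 z0.2 ^ p ≤ v z0.1 z0.2 := by
          calc v z0.1 z0.2 ^ p ≤ v z0.1 z0.2 ^ (1 : ℝ) :=
            Real.rpow_le_rpow_of_exponent_ge hvz0pos h3 hp.le
          _ = v z0.1 z0.2 := Real.rpow_one _
        have h4 : 0 < v z0.1 z0.2 ^ p := Real.rpow_pos_of_pos hvz0pos p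
        calc (‖z0.1‖ ^ 2 + z0.2 ^ 2) ^ (τ / 2) * v z0.1 z0.2 ^ p
            ≤ 1 * (v z0.1 z0.2 ^ p) := by nlinarith
        _ = v z0.1 z0.2 ^ p := one_mul _
        _ ≤ v z0.1 z0.2 := h2
        _ < ε := hvlt
      linarith

  -- conclude
  have h1 := hmin' (x'0, t0) htargetS
  have h2 : 0 ≤ w (x'0, t0) := le_trans hw0 h1
  have h3 : φ (x'0, t0) = ε / 2 - δ + ε / 2 * t0 ^ 2 := by
    simp only [hφdef, ← hRdef, ← hηR]
  have h4 : ε / 2 - δ ≤ φ (x'0, t0) := by rw [h3]; nlinarith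
  have h5 : φ (x'0, t0) ≤ v x'0 t0 := by
    rw [← sub_nonneg]
    simpa [hwdef] using h2
  exact le_trans h4 h5
end
end

section
/- Let $n\geq 3$ and suppose $f\in C^1(\bar H)$ satisfies: for every $b\in\partial H=\mathbb{R}^{n-1}$ and every $\lambda>0$, $f(x'+b,t)-\frac{\lambda^{n-2}}{|x|^{n-2}}f\big(\frac{\lambda^2 x'}{|x|^2}+b,\frac{\lambda^2 t}{|x|^2}\big)\geq 0$ for all $x=(x',t)\in H$ with $|x|<\lambda$. Then $f(x',t)=f(0,t)$ for all $(x',t)\in H$, i.e., $f$ depends only on the last variable. -/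
noncomputable section

open Filter Topology Real

set_option maxHeartbeats 1000000 in
theorem stmt12 (n : ℕ) (hn : 3 ≤ n)
    (f : EuclideanSpace ℝ (Fin (n - 1)) → ℝ → ℝ)
    (hf : ContDiffOn ℝ 1 (fun z : EuclideanSpace ℝ (Fin (n - 1)) × ℝ => f z.1 z.2)
      {z : EuclideanSpace ℝ (Fin (n - 1)) × ℝ | 0 ≤ z.2})
    (hkelvin : ∀ (b : EuclideanSpace ℝ (Fin (n - 1))) (lam : ℝ), 0 < lam →
      ∀ (x' : EuclideanSpace ℝ (Fin (n - 1))) (t : ℝ), 0 < t →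
        ‖x'‖ ^ 2 + t ^ 2 < lam ^ 2 →
        f (x' + b) t
          - lam ^ (n - 2) / ((‖x'‖ ^ 2 + t ^ 2) ^ (((n : ℝ) - 2) / 2))
            * f ((lam ^ 2 / (‖x'‖ ^ 2 + t ^ 2)) • x' + b)
                (lam ^ 2 * t / (‖x'‖ ^ 2 + t ^ 2)) ≥ 0) :
    ∀ (x' : EuclideanSpace ℝ (Fin (n - 1))) (t : ℝ), 0 < t → f x' t = f 0 t := by
  suffices key : ∀ (x' y' : EuclideanSpace ℝ (Fin (n - 1))) (t : ℝ), 0 < t →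
      f x' t ≤ f y' t by
    intro x' t ht
    exact le_antisymm (key x' 0 t ht) (key 0 x' t ht)
  intro x' y' t ht
  by_cases hxy : x' = y'
  · exact hxy ▸ le_rfl
  -- setup
  set d : ℝ := ‖x' - y'‖ with hd_def
  have hd : 0 < d := by
    rw [hd_def]; exact norm_pos_iff.mpr (sub_ne_zero.mpr hxy)
  set u : EuclideanSpace ℝ (Fin (n - 1)) := d⁻¹ • (x' - y') with hu_def
  have hu : ‖u‖ = 1 := by
    rw [hu_def, norm_smul, norm_inv, Real.norm_eq_abs, abs_of_pos hd]
    field_simp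
    exact hd_def.symm
  have hdu : d • u = x' - y' := by
    rw [hu_def, smul_smul, mul_inv_cancel₀ hd.ne']
    simp
  set m : ℝ := (n : ℝ) - 2 with hm_def
  have hm : 0 < m := by
    have : (3 : ℝ) ≤ (n : ℝ) := by exact_mod_cast hn
    rw [hm_def]; linarith
  have hmcast : ((n - 2 : ℕ) : ℝ) = m := by
    rw [hm_def, Nat.cast_sub (by omega)]
    norm_num
  set A : ℝ → ℝ := fun R => R ^ 2 + t ^ 2 with hA_def
  set B2 : ℝ → ℝ := fun R => (R + d) ^ 2 + t ^ 2 with hB2_def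
  have hApos : ∀ R, 0 < A R := fun R => by rw [hA_def]; positivity
  have hB2pos : ∀ R, 0 < B2 R := fun R => by rw [hB2_def]; positivity
  set ρ : ℝ → ℝ := fun R => Real.sqrt (B2 R / A R) with hρ_def
  have hρpos : ∀ R, 0 < ρ R := fun R => by
    rw [hρ_def]; exact Real.sqrt_pos.mpr (div_pos (hB2pos R) (hApos R))
  set c : ℝ → ℝ := fun R => (B2 R / A R) ^ (m / 4) with hc_def
  set g : ℝ → ℝ := fun R => (ρ R - 1) * R with hg_def
  -- Step 1: the basic inequality
  have step1 : ∀ R : ℝ, 0 < R → c R * f (y' + g R • u) (ρ R * t) ≤ f y' t := by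
    intro R hR
    have hAB : A R < B2 R := by
      simp only [hA_def, hB2_def]
      nlinarith
    set lam : ℝ := (A R * B2 R) ^ ((1 : ℝ) / 4) with hlam_def
    have hABpos : 0 < A R * B2 R := mul_pos (hApos R) (hB2pos R)
    have hlampos : 0 < lam := Real.rpow_pos_of_pos hABpos _
    have hlamsq : lam ^ 2 = Real.sqrt (A R * B2 R) := by
      rw [hlam_def, ← Real.rpow_natCast ((A R * B2 R) ^ ((1:ℝ)/4)) 2,
        ← Real.rpow_mul hABpos.le, Real.sqrt_eq_rpow]
      norm_num
    have hnormRu : ‖R • u‖ = R := by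
      rw [norm_smul, hu, Real.norm_eq_abs, abs_of_pos hR, mul_one]
    have hball : ‖R • u‖ ^ 2 + t ^ 2 < lam ^ 2 := by
      rw [hnormRu, hlamsq]
      have h1 : A R < Real.sqrt (A R * B2 R) := by
        rw [Real.lt_sqrt (hApos R).le]
        nlinarith [hApos R, mul_pos (hApos R) (sub_pos.mpr hAB)]
      simp only [hA_def] at h1
      exact h1
    have key := hkelvin (y' - R • u) lam hlampos (R • u) t ht hball
    have hAeq : ‖R • u‖ ^ 2 + t ^ 2 = A R := by rw [hnormRu]
    rw [hAeq] at key
    have hsum : R • u + (y' - R • u) = y' := by abel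
    rw [hsum] at key
    have hsA : Real.sqrt (A R) * Real.sqrt (A R) = A R := Real.mul_self_sqrt (hApos R).le
    have hratio : lam ^ 2 / A R = ρ R := by
      rw [hlamsq, hρ_def]
      simp only
      rw [Real.sqrt_mul (hApos R).le, Real.sqrt_div (hB2pos R).le]
      rw [div_eq_div_iff (hApos R).ne' (Real.sqrt_pos.mpr (hApos R)).ne']
      linear_combination Real.sqrt (B2 R) * hsA
    have hco : lam ^ (n - 2) / A R ^ (m / 2) = c R := by
      rw [hc_def]
      simp only
      rw [← Real.rpow_natCast lam (n - 2), hmcast, hlam_def,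
        ← Real.rpow_mul hABpos.le,
        show (1 : ℝ) / 4 * m = m / 4 by ring]
      have h2 : A R ^ (m / 2) = A R ^ (m / 4) * A R ^ (m / 4) := by
        rw [← Real.rpow_add (hApos R)]; ring_nf
      rw [h2, Real.mul_rpow (hApos R).le (hB2pos R).le,
        Real.div_rpow (hB2pos R).le (hApos R).le]
      have h3 : (0 : ℝ) < A R ^ (m / 4) := Real.rpow_pos_of_pos (hApos R) _
      field_simp
    have hpt1 : (lam ^ 2 / A R) • (R • u) + (y' - R • u) = y' + g R • u := by
      rw [hratio, hg_def]
      simp only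
      rw [smul_smul]
      module
    have hpt2 : lam ^ 2 * t / A R = ρ R * t := by
      rw [show lam ^ 2 * t / A R = lam ^ 2 / A R * t by ring, hratio]
    rw [hco, hpt1, hpt2] at key
    linarith
  -- Step 2: limits as R → ∞
  have hinv : Tendsto (fun R : ℝ => R⁻¹) atTop (𝓝 0) := tendsto_inv_atTop_zero
  have hfrac : Tendsto (fun R => (2 * d * R + d ^ 2) / A R) atTop (𝓝 0) := by
    have hcont : ContinuousAt (fun s : ℝ => (2 * d * s + d ^ 2 * s ^ 2) / (1 + t ^ 2 * s ^ 2)) 0 := by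
      apply ContinuousAt.div
      · fun_prop
      · fun_prop
      · norm_num
    have h0 : Tendsto (fun s : ℝ => (2 * d * s + d ^ 2 * s ^ 2) / (1 + t ^ 2 * s ^ 2)) (𝓝 0) (𝓝 0) := by
      have := hcont.tendsto
      simpa using this
    apply (h0.comp hinv).congr'
    filter_upwards [eventually_gt_atTop (0 : ℝ)] with R hR
    simp only [Function.comp, hA_def]
    rw [div_eq_div_iff (by positivity) (by positivity)]
    field_simp
  have hBA : Tendsto (fun R => B2 R / A R) atTop (𝓝 1) := by
    have h1 : Tendsto (fun R => 1 + (2 * d * R + d ^ 2) / A R) atTop (𝓝 (1 + 0)) :=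
      tendsto_const_nhds.add hfrac
    rw [add_zero] at h1
    apply h1.congr
    intro R
    rw [hA_def, hB2_def]
    simp only
    field_simp
    ring
  have hρlim : Tendsto ρ atTop (𝓝 1) := by
    have h1 : Tendsto (fun R => Real.sqrt (B2 R / A R)) atTop (𝓝 (Real.sqrt 1)) :=
      (Real.continuous_sqrt.tendsto 1).comp hBA
    rw [Real.sqrt_one] at h1
    rw [hρ_def]
    exact h1
  have hclim : Tendsto c atTop (𝓝 1) := by
    have hcont : ContinuousAt (fun x : ℝ => x ^ (m / 4)) 1 :=
      Real.continuousAt_rpow_const 1 (m / 4) (Or.inl one_ne_zero)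
    have h1 := hcont.tendsto.comp hBA
    rw [hc_def]
    simpa [Function.comp_def] using h1
  have hk : Tendsto (fun R => (B2 R / A R - 1) * R) atTop (𝓝 (2 * d)) := by
    have hcont : ContinuousAt (fun s : ℝ => (2 * d + d ^ 2 * s) / (1 + t ^ 2 * s ^ 2)) 0 := by
      apply ContinuousAt.div
      · fun_prop
      · fun_prop
      · norm_num
    have h0 : Tendsto (fun s : ℝ => (2 * d + d ^ 2 * s) / (1 + t ^ 2 * s ^ 2)) (𝓝 0) (𝓝 (2 * d)) := by
      have := hcont.tendsto
      simpa using this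
    apply (h0.comp hinv).congr'
    filter_upwards [eventually_gt_atTop (0 : ℝ)] with R hR
    simp only [Function.comp, hA_def, hB2_def]
    have hAne : (R ^ 2 + t ^ 2 : ℝ) ≠ 0 := by positivity
    field_simp
    ring
  have hglim : Tendsto g atTop (𝓝 d) := by
    have hden : Tendsto (fun R => ρ R + 1) atTop (𝓝 (1 + 1)) :=
      hρlim.add tendsto_const_nhds
    have hdiv : Tendsto (fun R => ((B2 R / A R - 1) * R) / (ρ R + 1)) atTop (𝓝 (2 * d / (1 + 1))) :=
      hk.div hden (by norm_num)
    rw [show (2 * d / (1 + 1) : ℝ) = d by ring] at hdiv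
    apply hdiv.congr
    intro R
    have hρsq : ρ R ^ 2 = B2 R / A R := by
      rw [hρ_def]; exact Real.sq_sqrt (div_pos (hB2pos R) (hApos R)).le
    have hfac : B2 R / A R - 1 = (ρ R - 1) * (ρ R + 1) := by
      rw [← hρsq]; ring
    rw [hg_def, hfac]
    simp only
    have hne : ρ R + 1 ≠ 0 := by positivity
    field_simp
  have hpt : Tendsto (fun R => ((y' + g R • u, ρ R * t) :
      EuclideanSpace ℝ (Fin (n - 1)) × ℝ)) atTop (𝓝 (x', t)) := by
    have h1 : Tendsto (fun R => y' + g R • u) atTop (𝓝 (y' + d • u)) :=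
      tendsto_const_nhds.add (hglim.smul_const u)
    rw [hdu, show y' + (x' - y') = x' by abel] at h1
    have h2 : Tendsto (fun R => ρ R * t) atTop (𝓝 (1 * t)) := hρlim.mul_const t
    rw [one_mul] at h2
    exact h1.prodMk_nhds h2
  have hfc : Tendsto (fun R => f (y' + g R • u) (ρ R * t)) atTop (𝓝 (f x' t)) := by
    have hcont : ContinuousWithinAt
        (fun z : EuclideanSpace ℝ (Fin (n - 1)) × ℝ => f z.1 z.2)
        {z : EuclideanSpace ℝ (Fin (n - 1)) × ℝ | 0 ≤ z.2} (x', t) :=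
      (hf.continuousOn) (x', t) (by simp [ht.le])
    have hmem : ∀ R : ℝ, ((y' + g R • u, ρ R * t) :
        EuclideanSpace ℝ (Fin (n - 1)) × ℝ) ∈
        {z : EuclideanSpace ℝ (Fin (n - 1)) × ℝ | 0 ≤ z.2} := fun R => by
      simp only [Set.mem_setOf_eq]
      exact mul_nonneg (hρpos R).le ht.le
    exact hcont.tendsto.comp
      (tendsto_nhdsWithin_iff.mpr ⟨hpt, Eventually.of_forall hmem⟩)
  have hfinal : Tendsto (fun R => c R * f (y' + g R • u) (ρ R * t)) atTop
      (𝓝 (1 * f x' t)) := hclim.mul hfc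
  rw [one_mul] at hfinal
  exact le_of_tendsto hfinal
    (by filter_upwards [eventually_gt_atTop (0 : ℝ)] with R hR using step1 R hR)
end
end

section
/- Let $p,q,a,b$ be reals with $p>1$, $q\geq 1$, $2q\neq p+1$, $n\geq 3$, and set $A=(2n(n-2)/(p+1))^{1/2}$, $c_+>0$, $B=(c_+^{-1}A)^{-(p-1)/(2q-p-1)}$. Then the function $u(t)=(\frac{p-1}{2}At+B)^{-2/(p-1)}$, viewed as a function on the upper half space depending only on the last coordinate, satisfies $\Delta u=n(n-2)u^p$ in $H$ and $\partial u/\partial t=-c_+u^q$ on $\partial H$. -/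
noncomputable section

theorem stmt18 (n : ℕ) (hn : 3 ≤ n) (p q c A B : ℝ)
    (hp : 1 < p) (hq : 1 ≤ q) (hne : 2 * q ≠ p + 1) (hc : 0 < c)
    (hA : A = Real.sqrt (2 * n * ((n : ℝ) - 2) / (p + 1)))
    (hB : B = (c⁻¹ * A) ^ (-((p - 1) / (2 * q - p - 1))))
    (u : EuclideanSpace ℝ (Fin (n - 1)) → ℝ → ℝ)
    (hu : ∀ (x' : EuclideanSpace ℝ (Fin (n - 1))) (t : ℝ),
      u x' t = ((p - 1) / 2 * A * t + B) ^ (-(2 / (p - 1)))) :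
    (∀ (x' : EuclideanSpace ℝ (Fin (n - 1))) (t : ℝ), 0 < t →
        lapH u x' t = n * ((n : ℝ) - 2) * u x' t ^ p) ∧
    (∀ x' : EuclideanSpace ℝ (Fin (n - 1)),
        deriv (fun t => u x' t) 0 = -c * u x' 0 ^ q) := by
  have hn3 : (3 : ℝ) ≤ (n : ℝ) := by exact_mod_cast hn
  have hp1 : p - 1 ≠ 0 := by intro h; linarith [hp]
  have hp1' : (0 : ℝ) < p + 1 := by linarith
  have hne' : 2 * q - p - 1 ≠ 0 := by intro h; apply hne; linarith
  have harg : 0 < 2 * (n : ℝ) * ((n : ℝ) - 2) / (p + 1) := by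
    apply div_pos; nlinarith; exact hp1'
  have hApos : 0 < A := by rw [hA]; exact Real.sqrt_pos.mpr harg
  have hA2 : A ^ 2 = 2 * (n : ℝ) * ((n : ℝ) - 2) / (p + 1) := by
    rw [hA, sq, Real.mul_self_sqrt harg.le]
  have hX : 0 < c⁻¹ * A := mul_pos (inv_pos.mpr hc) hApos
  have hBpos : 0 < B := by rw [hB]; exact Real.rpow_pos_of_pos hX _
  set r : ℝ := -(2 / (p - 1)) with hr
  set k : ℝ := (p - 1) / 2 * A with hk
  have hkpos : 0 < k := by
    apply mul_pos _ hApos; linarith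
  have key : ∀ (ρ : ℝ) (t : ℝ), 0 < k * t + B →
      HasDerivAt (fun s : ℝ => (k * s + B) ^ ρ) (ρ * (k * t + B) ^ (ρ - 1) * k) t := by
    intro ρ t ht
    have h1 : HasDerivAt (fun s : ℝ => k * s + B) k t := by
      simpa using ((hasDerivAt_id t).const_mul k).add_const B
    exact (Real.hasDerivAt_rpow_const (Or.inl ht.ne')).comp t h1
  constructor
  · intro x' t0 ht0
    have hz : 0 < k * t0 + B := by positivity
    have hopen : ∀ᶠ t in nhds t0, 0 < k * t + B := by
      have hcont : ContinuousAt (fun t : ℝ => k * t + B) t0 := by fun_prop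
      exact continuousAt_const.eventually_lt hcont (by simpa using hz)
    have e1 : deriv (fun s : ℝ => (k * s + B) ^ r) =ᶠ[nhds t0]
        fun t => r * (k * t + B) ^ (r - 1) * k :=
      hopen.mono fun t ht => (key r t ht).deriv
    have hdd : deriv (deriv (fun s : ℝ => (k * s + B) ^ r)) t0
        = r * ((r - 1) * (k * t0 + B) ^ (r - 1 - 1) * k) * k := by
      rw [Filter.EventuallyEq.deriv_eq e1]
      exact (((key (r - 1) t0 hz).const_mul r).mul_const k).deriv
    have hufun : (fun s : ℝ => u x' s) = fun s : ℝ => (k * s + B) ^ r :=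
      funext fun s => hu x' s
    simp only [lapH, hu, hufun]
    rw [hdd]
    simp only [deriv_const', deriv_const, Finset.sum_const, smul_zero, zero_add]
    -- goal: r * ((r-1) * z^(r-2) * k) * k = n * (n-2) * (z^r)^p
    have hrp : ((k * t0 + B) ^ r) ^ p = (k * t0 + B) ^ (r - 1 - 1) := by
      rw [← Real.rpow_mul hz.le]
      congr 1
      rw [hr]
      field_simp
      ring
    rw [hrp]
    have hcoef : r * (r - 1) * k ^ 2 = (n : ℝ) * ((n : ℝ) - 2) := by
      have hk2 : k ^ 2 = ((p - 1) / 2) ^ 2 * A ^ 2 := by rw [hk]; ring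
      rw [hk2, hA2, hr]
      field_simp
      ring
    linear_combination (k * t0 + B) ^ (r - 1 - 1) * hcoef
  · intro x'
    have h0 : 0 < k * 0 + B := by simpa using hBpos
    have hufun : (fun t : ℝ => u x' t) = fun s : ℝ => (k * s + B) ^ r :=
      funext fun s => hu x' s
    rw [hufun, (key r 0 h0).deriv, hu]
    simp only [mul_zero, zero_add]
    have hrk : r * k = -A := by
      rw [hr, hk]; field_simp
    have hBe : B ^ (r - 1 - r * q) = c / A := by
      have he : r - 1 - r * q = (2 * q - p - 1) / (p - 1) := by
        rw [hr]; field_simp; ring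
      rw [he, hB, ← Real.rpow_mul hX.le]
      have hm : -((p - 1) / (2 * q - p - 1)) * ((2 * q - p - 1) / (p - 1)) = -1 := by
        field_simp
      rw [hm, Real.rpow_neg_one, mul_inv, inv_inv]
      field_simp
    have hsplit : B ^ (r - 1) = B ^ (r * q) * B ^ (r - 1 - r * q) := by
      rw [← Real.rpow_add hBpos]; ring_nf
    have hq2 : (B ^ r) ^ q = B ^ (r * q) := (Real.rpow_mul hBpos.le r q).symm
    rw [hq2, hsplit, hBe]
    have hA0 : A ≠ 0 := hApos.ne'
    field_simp
    linear_combination B ^ (r * q) * c * hrk - A * (1 - B ^ (r * q) * c) * inv_mul_cancel₀ hp1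
end
end
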